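/- Let ℝ^N denote N-dimensional Euclidean space with inner product ⟨·,·⟩ and norm ‖·‖. Let f : ℝ^N → ℝ be differentiable with ∇f Lipschitz continuous with constant L_f, let Ψ : ℝ^N → ℝ, let x ∈ ℝ^N, and let Θ be a self-adjoint linear map on ℝ^N satisfying ⟨u, Θu⟩ ≥ α‖u‖² for all u ∈ ℝ^N, where α > 0. Suppose d̄ minimizes d ↦ ⟨∇f(x), d⟩ + (1/2)⟨d, Θd⟩ + Ψ(x + d) over ℝ^N, and set F = f + Ψ. Then F(x + d̄) ≤ F(x) + ((L_f − α)/2)‖d̄‖². -/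

import Mathlib

open scoped RealInnerProductSpace

lemma descent_aux {N : ℕ}
    (f : EuclideanSpace ℝ (Fin N) → ℝ)
    (gradf : EuclideanSpace ℝ (Fin N) → EuclideanSpace ℝ (Fin N))
    (hf : ∀ y, HasGradientAt f (gradf y) y)
    (Lf : ℝ)
    (hlip : ∀ y z, ‖gradf y - gradf z‖ ≤ Lf * ‖y - z‖)
    (x d : EuclideanSpace ℝ (Fin N)) :
    f (x + d) ≤ f x + ⟪gradf x, d⟫ + Lf / 2 * ‖d‖ ^ 2 := by
  set h : ℝ → ℝ := fun t =>
    f (x + t • d) - t * ⟪gradf x, d⟫ - Lf / 2 * t ^ 2 * ‖d‖ ^ 2 with hh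
  have hderiv : ∀ t : ℝ, HasDerivAt h
      (⟪gradf (x + t • d), d⟫ - ⟪gradf x, d⟫ - Lf * t * ‖d‖ ^ 2) t := by
    intro t
    have hcurve : HasDerivAt (fun t : ℝ => x + t • d) d t := by
      simpa using ((hasDerivAt_id t).smul_const d).const_add x
    have h1 : HasDerivAt (fun t : ℝ => f (x + t • d)) ⟪gradf (x + t • d), d⟫ t := by
      have := ((hf (x + t • d)).hasFDerivAt).comp_hasDerivAt t hcurve
      simp at this; exact this
    have h2 : HasDerivAt (fun t : ℝ => t * ⟪gradf x, d⟫) ⟪gradf x, d⟫ t := by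
      simpa using (hasDerivAt_id t).mul_const ⟪gradf x, d⟫
    have h3 : HasDerivAt (fun t : ℝ => Lf / 2 * t ^ 2 * ‖d‖ ^ 2)
        (Lf * t * ‖d‖ ^ 2) t := by
      have := ((hasDerivAt_pow 2 t).const_mul (Lf / 2)).mul_const (‖d‖ ^ 2)
      refine this.congr_deriv ?_
      rw [show (2:ℕ) - 1 = 1 from rfl]
      push_cast
      ring
    exact (h1.sub h2).sub h3
  have hmono : AntitoneOn h (Set.Icc (0:ℝ) 1) := by
    apply antitoneOn_of_deriv_nonpos (convex_Icc 0 1)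
    · exact fun t _ => ((hderiv t).continuousAt).continuousWithinAt
    · exact fun t _ => ((hderiv t).differentiableAt).differentiableWithinAt
    · intro t ht
      rw [interior_Icc] at ht
      rw [(hderiv t).deriv]
      have key : ⟪gradf (x + t • d) - gradf x, d⟫ ≤ Lf * t * ‖d‖ ^ 2 := by
        calc ⟪gradf (x + t • d) - gradf x, d⟫ ≤ ‖gradf (x + t • d) - gradf x‖ * ‖d‖ :=
              real_inner_le_norm _ _
          _ ≤ Lf * ‖(x + t • d) - x‖ * ‖d‖ := by
              have := hlip (x + t • d) x
              exact mul_le_mul_of_nonneg_right this (norm_nonneg d)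
          _ = Lf * t * ‖d‖ ^ 2 := by
              rw [add_sub_cancel_left, norm_smul]
              simp [abs_of_pos ht.1, Real.norm_eq_abs]
              ring
      have := inner_sub_left (𝕜 := ℝ) (gradf (x + t • d)) (gradf x) d
      linarith [key, this.symm.le, this.le]
  have h10 : h 1 ≤ h 0 := hmono (by norm_num) (by norm_num) zero_le_one
  simp only [hh, one_smul, zero_smul, add_zero, one_pow, one_mul, zero_mul,
    mul_zero, sub_zero, zero_pow] at h10
  nlinarith [h10]

theorem stmt_12 {N : ℕ}
    (f Ψ : EuclideanSpace ℝ (Fin N) → ℝ)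
    (gradf : EuclideanSpace ℝ (Fin N) → EuclideanSpace ℝ (Fin N))
    (hf : ∀ y, HasGradientAt f (gradf y) y)
    (Lf : ℝ) (hLf : 0 ≤ Lf)
    (hlip : ∀ y z, ‖gradf y - gradf z‖ ≤ Lf * ‖y - z‖)
    (x : EuclideanSpace ℝ (Fin N))
    (Θ : EuclideanSpace ℝ (Fin N) →ₗ[ℝ] EuclideanSpace ℝ (Fin N))
    (hΘsym : Θ.IsSymmetric)
    (α : ℝ) (hα : 0 < α)
    (hΘlb : ∀ u, α * ‖u‖ ^ 2 ≤ ⟪u, Θ u⟫)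
    (dbar : EuclideanSpace ℝ (Fin N))
    (hdbar : ∀ d, ⟪gradf x, dbar⟫ + 1 / 2 * ⟪dbar, Θ dbar⟫ + Ψ (x + dbar) ≤
      ⟪gradf x, d⟫ + 1 / 2 * ⟪d, Θ d⟫ + Ψ (x + d))
    (F : EuclideanSpace ℝ (Fin N) → ℝ) (hF : F = f + Ψ) :
    F (x + dbar) ≤ F x + (Lf - α) / 2 * ‖dbar‖ ^ 2 := by
  have hdesc := descent_aux f gradf hf Lf hlip x dbar
  have h0 := hdbar 0
  simp only [inner_zero_right, map_zero, add_zero, mul_zero, zero_add] at h0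
  have hq := hΘlb dbar
  subst hF
  simp only [Pi.add_apply]
  nlinarith [h0, hq, hdesc]
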